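/- For every p ∈ (0, 1], the inverse binary entropy H₂⁻¹(p), defined as the unique t ∈ [0, 1/2] with H₂(t) = p, satisfies H₂⁻¹(p) ≥ p / (2 · log₂(6 / p)). -/

import Mathlib

/-- The binary entropy function `H₂(t) = −t·log₂ t − (1−t)·log₂(1−t)` (with the
convention `0 · log₂ 0 = 0`, which holds automatically since `Real.log 0 = 0`). -/
noncomputable def binEnt (t : ℝ) : ℝ :=
  -(t * Real.logb 2 t) - (1 - t) * Real.logb 2 (1 - t)

/-- **Lemma A.1 (lower bound on the inverse binary entropy function).**
For every `p ∈ (0, 1]`, the inverse binary entropy `H₂⁻¹(p)`, i.e. any `t ∈ [0, 1/2]`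
with `H₂(t) = p`, satisfies `H₂⁻¹(p) ≥ p / (2 · log₂(6 / p))`. -/
theorem inverse_binary_entropy_lower_bound
    (p : ℝ) (hp : p ∈ Set.Ioc (0 : ℝ) 1)
    (t : ℝ) (ht : t ∈ Set.Icc (0 : ℝ) (1 / 2)) (hH : binEnt t = p) :
    t ≥ p / (2 * Real.logb 2 (6 / p)) := by
  obtain ⟨hp0, hp1⟩ := hp
  obtain ⟨ht0, ht12⟩ := ht
  have hl2 : (0:ℝ) < Real.log 2 := Real.log_pos one_lt_two
  -- t > 0
  have htpos : 0 < t := by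
    rcases lt_or_eq_of_le ht0 with h | h
    · exact h
    · exfalso
      rw [← h] at hH
      simp [binEnt] at hH
      linarith
  have ht1 : (0:ℝ) < 1 - t := by linarith
  -- Step A : -(1-t)·log(1-t) ≤ t
  have hA : -((1 - t) * Real.log (1 - t)) ≤ t := by
    have h := Real.log_le_sub_one_of_pos (x := (1 - t)⁻¹) (by positivity)
    rw [Real.log_inv] at h
    have h2 : (1 - t) * (-Real.log (1 - t)) ≤ (1 - t) * ((1 - t)⁻¹ - 1) :=
      mul_le_mul_of_nonneg_left h ht1.le
    rw [mul_sub, mul_inv_cancel₀ ht1.ne'] at h2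
    nlinarith
  -- p·log 2 ≤ t·(1 - log t)
  have hEnt : p * Real.log 2 ≤ t * (1 - Real.log t) := by
    have hb : binEnt t * Real.log 2 = -(t * Real.log t) - (1 - t) * Real.log (1 - t) := by
      simp only [binEnt, Real.logb]
      field_simp
    rw [hH] at hb
    nlinarith
  -- Step B : 1 - log t ≤ 2/√(e t)
  have he : (0:ℝ) < Real.exp 1 := Real.exp_pos 1
  have hetpos : (0:ℝ) < Real.exp 1 * t := by positivity
  have hets : 0 < Real.sqrt (Real.exp 1 * t) := Real.sqrt_pos.2 hetpos
  have hB : 1 - Real.log t ≤ 2 / Real.sqrt (Real.exp 1 * t) := by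
    have h := Real.log_le_sub_one_of_pos (x := (Real.sqrt (Real.exp 1 * t))⁻¹) (by positivity)
    rw [Real.log_inv, Real.log_sqrt hetpos.le, Real.log_mul he.ne' htpos.ne',
      Real.log_exp] at h
    rw [div_eq_mul_inv]
    linarith
  -- (p log 2)² ≤ 4 t / e
  have hsq : (p * Real.log 2) ^ 2 ≤ 4 * t / Real.exp 1 := by
    have h1 : p * Real.log 2 ≤ 2 * t / Real.sqrt (Real.exp 1 * t) := by
      have := mul_le_mul_of_nonneg_left hB htpos.le
      calc p * Real.log 2 ≤ t * (1 - Real.log t) := hEnt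
        _ ≤ t * (2 / Real.sqrt (Real.exp 1 * t)) := this
        _ = 2 * t / Real.sqrt (Real.exp 1 * t) := by ring
    have hpl : 0 ≤ p * Real.log 2 := by positivity
    have h2 : (p * Real.log 2) ^ 2 ≤ (2 * t / Real.sqrt (Real.exp 1 * t)) ^ 2 := by
      apply sq_le_sq' (by linarith) h1
    have h3 : (2 * t / Real.sqrt (Real.exp 1 * t)) ^ 2 = 4 * t / Real.exp 1 := by
      rw [div_pow, Real.sq_sqrt hetpos.le]
      field_simp
      ring
    linarith
  -- e p² ≤ 36 t
  have hln2 : (1:ℝ)/3 < Real.log 2 := by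
    have := Real.log_two_gt_d9
    linarith
  have hept : Real.exp 1 * p ^ 2 ≤ 36 * t := by
    have h1 : Real.exp 1 * (p * Real.log 2) ^ 2 ≤ 4 * t := by
      rw [le_div_iff₀ he] at hsq
      linarith
    have hl2sq : (1:ℝ)/9 ≤ (Real.log 2) ^ 2 := by nlinarith
    have h2 := mul_le_mul_of_nonneg_left hl2sq (mul_nonneg he.le (sq_nonneg p))
    nlinarith [h1, h2]
  -- 1 - log t ≤ 2 log (6/p)
  have hC : 1 - Real.log t ≤ 2 * Real.log (6 / p) := by
    have h6p : (0:ℝ) < 6 / p := by positivity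
    have hle : Real.exp 1 / t ≤ 36 / p ^ 2 := by
      rw [div_le_div_iff₀ htpos (by positivity)]
      nlinarith
    have := Real.log_le_log (by positivity) hle
    rw [Real.log_div he.ne' htpos.ne', Real.log_exp] at this
    have h36 : Real.log (36 / p ^ 2) = 2 * Real.log (6 / p) := by
      rw [show (36:ℝ) / p ^ 2 = (6 / p) ^ 2 by field_simp; ring, Real.log_pow]
      push_cast; ring
    linarith
  -- conclude
  have hlogb : 0 < Real.logb 2 (6 / p) := by
    apply Real.logb_pos one_lt_two
    rw [lt_div_iff₀ hp0]; linarith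
  rw [ge_iff_le, div_le_iff₀ (by positivity)]
  have hfinal : p * Real.log 2 ≤ t * (2 * Real.log (6 / p)) := by
    nlinarith
  calc p = p * Real.log 2 / Real.log 2 := by field_simp
    _ ≤ t * (2 * Real.log (6 / p)) / Real.log 2 := by gcongr
    _ = t * (2 * Real.logb 2 (6 / p)) := by rw [Real.logb]; ring
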